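/- With F_n as defined by the contour integral, for all integers n, x, t one has F_n(x,t+1) = F_n(x,t) + (1−q)·F_{n−1}(x−1,t). -/

import Mathlib

open Complex

/-- `Fker q m x t` is `F_m(x,t) = (1/2πi) ∮ dw w^{-m} (1+w)^{m-x-1} (1+(1-q)w)^t`,
with the contour a circle around 0 of radius in (1, 1/(1-q)), enclosing 0 and -1
but not the pole at -1/(1-q). -/
noncomputable def Fker (q : ℝ) (m x t : ℤ) : ℂ :=
  (2 * Real.pi * Complex.I)⁻¹ *
    ∮ w in C(0, (1 + (1 - q)⁻¹) / 2),
      w ^ (-m) * (1 + w) ^ (m - x - 1) * (1 + (1 - (q : ℂ)) * w) ^ t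

theorem F_time_recursion_shift (q : ℝ) (hq0 : 0 < q) (hq1 : q < 1) (n x t : ℤ) :
    Fker q n x (t + 1) = Fker q n x t + (1 - (q : ℂ)) * Fker q (n - 1) (x - 1) t := by
  set R : ℝ := (1 + (1 - q)⁻¹) / 2 with hR
  set c : ℂ := 1 - (q : ℂ) with hc
  have hq : (0:ℝ) < 1 - q := by linarith
  have h1 : (1:ℝ) < (1 - q)⁻¹ := (one_lt_inv₀ hq).mpr (by linarith)
  have hR1 : 1 < R := by rw [hR]; linarith
  have hR0 : 0 ≤ R := by linarith
  have hRlt : R < (1 - q)⁻¹ := by rw [hR]; linarith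
  -- facts about points on the sphere
  have habs : ∀ w : ℂ, w ∈ Metric.sphere (0:ℂ) R → ‖w‖ = R := by
    intro w hw
    simpa using hw
  have hw0 : ∀ w : ℂ, w ∈ Metric.sphere (0:ℂ) R → w ≠ 0 := by
    intro w hw h
    rw [h] at hw
    simp at hw
    rw [← hw] at hR1; linarith
  have hw1 : ∀ w : ℂ, w ∈ Metric.sphere (0:ℂ) R → 1 + w ≠ 0 := by
    intro w hw h
    have : w = -1 := by linear_combination h
    rw [this] at hw; simp at hw
    rw [← hw] at hR1; linarith
  have hwc : ∀ w : ℂ, w ∈ Metric.sphere (0:ℂ) R → 1 + c * w ≠ 0 := by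
    intro w hw h
    have : c * w = -1 := by linear_combination h
    have habs' : ‖c * w‖ = 1 := by rw [this]; simp
    rw [norm_mul, habs w hw] at habs'
    have hcabs : ‖c‖ = 1 - q := by
      rw [hc]
      have : (1 : ℂ) - (q:ℂ) = ((1 - q : ℝ) : ℂ) := by push_cast; ring
      rw [this, Complex.norm_real, Real.norm_eq_abs, abs_of_pos hq]
    rw [hcabs] at habs'
    have : R = (1 - q)⁻¹ := by
      field_simp at habs' ⊢
      linarith [habs']
    linarith [this ▸ hRlt]
  -- integrability of the pieces
  have hcont : ∀ m t' : ℤ, CircleIntegrable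
      (fun w : ℂ => w ^ (-m) * (1 + w) ^ (m - x - 1) * (1 + c * w) ^ t') 0 R := by
    intro m t'
    apply ContinuousOn.circleIntegrable hR0
    apply ContinuousOn.mul
    apply ContinuousOn.mul
    · exact (continuousOn_id).zpow₀ _ (fun w hw => Or.inl (hw0 w hw))
    · exact (continuousOn_const.add continuousOn_id).zpow₀ _ (fun w hw => Or.inl (hw1 w hw))
    · exact (continuousOn_const.add (continuousOn_const.mul continuousOn_id)).zpow₀ _
        (fun w hw => Or.inl (hwc w hw))
  have hcont2 : CircleIntegrable
      (fun w : ℂ => c • (w ^ (-(n-1)) * (1 + w) ^ ((n-1) - (x-1) - 1) * (1 + c * w) ^ t)) 0 R := by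
    apply ContinuousOn.circleIntegrable hR0
    apply ContinuousOn.smul (f := fun _ => c) continuousOn_const
    apply ContinuousOn.mul
    apply ContinuousOn.mul
    · exact (continuousOn_id).zpow₀ _ (fun w hw => Or.inl (hw0 w hw))
    · exact (continuousOn_const.add continuousOn_id).zpow₀ _ (fun w hw => Or.inl (hw1 w hw))
    · exact (continuousOn_const.add (continuousOn_const.mul continuousOn_id)).zpow₀ _
        (fun w hw => Or.inl (hwc w hw))
  have key : (∮ w in C(0, R), w ^ (-n) * (1 + w) ^ (n - x - 1) * (1 + c * w) ^ (t + 1))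
      = (∮ w in C(0, R), w ^ (-n) * (1 + w) ^ (n - x - 1) * (1 + c * w) ^ t)
        + c • (∮ w in C(0, R),
            w ^ (-(n-1)) * (1 + w) ^ ((n-1) - (x-1) - 1) * (1 + c * w) ^ t) := by
    rw [← circleIntegral.integral_smul]
    apply eq_add_of_sub_eq'
    rw [← circleIntegral.integral_sub (hcont n (t+1)) (hcont n t)]
    apply circleIntegral.integral_congr hR0
    intro w hw
    have e1 : (n-1) - (x-1) - 1 = n - x - 1 := by ring
    simp only [Pi.sub_apply, smul_eq_mul, e1]
    have h2 : w ^ (-(n-1)) = w ^ (-n) * w := by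
      rw [← zpow_add_one₀ (hw0 w hw)]; ring_nf
    have h3 : (1 + c * w) ^ (t + 1) = (1 + c * w) ^ t * (1 + c * w) :=
      zpow_add_one₀ (hwc w hw) t
    rw [h3, h2]; ring
  simp only [Fker, ← hR, ← hc, key, smul_eq_mul]
  ring
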